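/- Let τ be a nowhere-vanishing smooth function of variables ξ_p (p in a parameter set) and lattice variables with shifts T_a, satisfying the differential-difference equation (p−q)(τ·T_q(∂_pτ) − (T_qτ)·∂_pτ) = τ·T_qτ − (T_pτ)·(T_qT_p⁻¹τ), and the Hirota bilinear equation of the previous context. Define S_{a,b} = (T_a⁻¹T_bτ)/τ. Then (p−a)(p−b)·∂S_{a,b}/∂ξ_p = (a−b)·(S_{a,p}S_{p,b} − S_{a,b}) for pairwise distinct a,b,p. -/

import Mathlib

/-- Partial derivative with respect to the continuous Miwa variable `ξ_p`
(at fixed lattice point `n`). -/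
noncomputable def pdx {N : ℕ} (p : Fin N)
    (f : (Fin N → ℝ) → (Fin N → ℤ) → ℂ) (x : Fin N → ℝ) (n : Fin N → ℤ) : ℂ :=
  fderiv ℝ (fun y => f y n) x (Pi.single p 1)

lemma fderiv_div_apply' {E : Type*} [NormedAddCommGroup E] [NormedSpace ℝ E]
    {u v : E → ℂ} {x : E} (hu : DifferentiableAt ℝ u x) (hv : DifferentiableAt ℝ v x)
    (hx : v x ≠ 0) (w : E) :
    fderiv ℝ (fun y => u y / v y) x w
      = (v x * fderiv ℝ u x w - u x * fderiv ℝ v x w) / (v x) ^ 2 := by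
  have hinv : HasFDerivAt (fun y => (v y)⁻¹)
      ((((1 : ℂ →L[ℂ] ℂ).smulRight (-(v x ^ 2)⁻¹)).restrictScalars ℝ).comp (fderiv ℝ v x)) x :=
    ((hasFDerivAt_inv hx).restrictScalars ℝ).comp x hv.hasFDerivAt
  have hmul := hu.hasFDerivAt.mul hinv
  have h2 : (fun y => u y / v y) = fun y => u y * (v y)⁻¹ := by
    funext y; rw [div_eq_mul_inv]
  rw [h2, show (fun y => u y * (v y)⁻¹) = (u * fun y => (v y)⁻¹) from rfl, hmul.fderiv]
  simp only [ContinuousLinearMap.add_apply, ContinuousLinearMap.smul_apply,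
    ContinuousLinearMap.coe_comp', Function.comp_apply,
    ContinuousLinearMap.coe_restrictScalars', ContinuousLinearMap.smulRight_apply,
    ContinuousLinearMap.one_apply, smul_eq_mul]
  field_simp
  ring

/-- the continuous relation for `S_{a,b} = (T_a⁻¹ T_b τ)/τ`
follows from the Hirota bilinear equation and the differential-difference
equation for `τ`. -/
theorem tau_implies_continuous_S_relation {N : ℕ}
    (τ : (Fin N → ℝ) → (Fin N → ℤ) → ℂ)
    (par : Fin N → ℂ) (hpar : Function.Injective par)
    (hτ : ∀ x n, τ x n ≠ 0)
    (hdiffble : ∀ n, Differentiable ℝ (fun x => τ x n))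
    (hHirota : ∀ p q r : Fin N, p ≠ q → p ≠ r → q ≠ r →
      ∀ (x : Fin N → ℝ) (n : Fin N → ℤ),
      (par p - par q) * τ x (n + Pi.single p 1 + Pi.single q 1) * τ x (n + Pi.single r 1)
        + (par q - par r) * τ x (n + Pi.single q 1 + Pi.single r 1) * τ x (n + Pi.single p 1)
        + (par r - par p) * τ x (n + Pi.single r 1 + Pi.single p 1) * τ x (n + Pi.single q 1)
        = 0)
    (hdd : ∀ p q : Fin N, p ≠ q → ∀ (x : Fin N → ℝ) (n : Fin N → ℤ),
      (par p - par q) * (τ x n * pdx p τ x (n + Pi.single q 1)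
          - τ x (n + Pi.single q 1) * pdx p τ x n)
        = τ x n * τ x (n + Pi.single q 1)
          - τ x (n + Pi.single p 1) * τ x (n + Pi.single q 1 - Pi.single p 1))
    (S : Fin N → Fin N → (Fin N → ℝ) → (Fin N → ℤ) → ℂ)
    (hS : ∀ a b x n, S a b x n = τ x (n - Pi.single a 1 + Pi.single b 1) / τ x n)
    (a b p : Fin N) (hab : a ≠ b) (hap : a ≠ p) (hbp : b ≠ p) :
    ∀ (x : Fin N → ℝ) (n : Fin N → ℤ),
      (par p - par a) * (par p - par b) * pdx p (S a b) x n
        = (par a - par b) * (S a p x n * S p b x n - S a b x n) := by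
  intro x n
  have hSfun : (fun y => S a b y n)
      = fun y => τ y (n - Pi.single a 1 + Pi.single b 1) / τ y n :=
    funext fun y => hS a b y n
  have hkey : pdx p (S a b) x n
      = (τ x n * pdx p τ x (n - Pi.single a 1 + Pi.single b 1)
         - τ x (n - Pi.single a 1 + Pi.single b 1) * pdx p τ x n) / (τ x n) ^ 2 := by
    unfold pdx
    rw [hSfun]
    exact fderiv_div_apply' (hdiffble _ x) (hdiffble _ x) (hτ x n) _
  have h1 := hdd p b hbp.symm x (n - Pi.single a 1)
  have h2 := hdd p a hap.symm x (n - Pi.single a 1)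
  rw [show n - Pi.single a 1 + Pi.single a 1 = n from by abel] at h2
  have h3 := hHirota a b p hab hap hbp x (n - Pi.single a 1 - Pi.single p 1)
  rw [show n - Pi.single a 1 - Pi.single p 1 + Pi.single a 1 + Pi.single b 1
        = n - Pi.single p 1 + Pi.single b 1 from by abel,
      show n - Pi.single a 1 - Pi.single p 1 + Pi.single p 1 = n - Pi.single a 1 from by abel,
      show n - Pi.single a 1 - Pi.single p 1 + Pi.single b 1 + Pi.single p 1
        = n - Pi.single a 1 + Pi.single b 1 from by abel,
      show n - Pi.single a 1 - Pi.single p 1 + Pi.single a 1 = n - Pi.single p 1 from by abel,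
      show n - Pi.single a 1 + Pi.single a 1 = n from by abel,
      show n - Pi.single a 1 - Pi.single p 1 + Pi.single b 1
        = n - Pi.single a 1 + Pi.single b 1 - Pi.single p 1 from by abel] at h3
  rw [hkey, hS a p, hS p b, hS a b]
  have hn0 := hτ x n
  have hnA := hτ x (n - Pi.single a 1)
  have H : ((par p - par a) * (par p - par b)
        * (τ x n * pdx p τ x (n - Pi.single a 1 + Pi.single b 1)
           - τ x (n - Pi.single a 1 + Pi.single b 1) * pdx p τ x n))
        * τ x (n - Pi.single a 1)
      = ((par a - par b) * (τ x (n - Pi.single a 1 + Pi.single p 1)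
            * τ x (n - Pi.single p 1 + Pi.single b 1)
          - τ x (n - Pi.single a 1 + Pi.single b 1) * τ x n)) * τ x (n - Pi.single a 1) := by
    linear_combination (par p - par a) * τ x n * h1
      - (par p - par b) * τ x (n - Pi.single a 1 + Pi.single b 1) * h2
      - τ x (n - Pi.single a 1 + Pi.single p 1) * h3
  have G0 := mul_right_cancel₀ hnA H
  field_simp
  linear_combination G0
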